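/- For any L > 0, any k_p, k_i, k_d ∈ ℝ, and any y* ∈ ℝ, there exist an L-Lipschitz function f : ℝ³ → ℝ and differentiable functions x₁, x₂, x₃ : [0,∞) → ℝ satisfying x₁'(t) = x₂(t), x₂'(t) = x₃(t), x₃'(t) = f(x₁(t), x₂(t), x₃(t)) + k_p·e(t) + k_i·∫₀ᵗ e(s)ds + k_d·e'(t) for all t ≥ 0 (where e(t) = x₁(t) − y*), such that sup_{t ≥ 0} |e(t)| = ∞. -/

import Mathlib

open Real MeasureTheory intervalIntegral

open Polynomial in
lemma exists_root_pos_re (m kd kp ki : ℝ) (hm : 0 < m) :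
    ∃ z : ℂ, 0 < z.re ∧ z^4 = m*z^3 + kd*z^2 + kp*z + ki := by
  set Q : Polynomial ℂ := C (m:ℂ) * X^3 + C (kd:ℂ) * X^2 + C (kp:ℂ) * X + C (ki:ℂ) with hQ
  set P : Polynomial ℂ := X^(3+1) - Q with hP
  have h3 : Q.degree ≤ 3 := by rw [hQ]; compute_degree
  have hdQ : Q.degree < ((3+1 : ℕ) : WithBot ℕ) := lt_of_le_of_lt h3 (by decide)
  have hmo : P.Monic := Polynomial.monic_X_pow_sub hdQ
  have hQ0 : Q ≠ 0 := by
    intro h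
    have := congrArg (fun p => Polynomial.coeff p 3) h
    simp [hQ, coeff_X_pow] at this
    exact hm.ne' (by exact_mod_cast this)
  have hdP : P.natDegree = 4 := by
    rw [hP, Polynomial.natDegree_sub_eq_left_of_natDegree_lt, natDegree_X_pow]
    rw [natDegree_X_pow]
    exact Polynomial.natDegree_lt_iff_degree_lt hQ0 |>.2 (by exact_mod_cast hdQ)
  have hsplit : P.Splits := IsAlgClosed.splits P
  have hsum : P.nextCoeff = -P.roots.sum :=
    hsplit.nextCoeff_eq_neg_sum_roots_of_monic hmo
  have hnext : P.nextCoeff = -(m:ℂ) := by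
    rw [Polynomial.nextCoeff_of_natDegree_pos (by rw [hdP]; norm_num), hdP]
    simp [hP, hQ, coeff_X_pow]
  have hsumroots : P.roots.sum = (m:ℂ) := (neg_inj.mp (hnext.symm.trans hsum)).symm
  have hre : ((P.roots).map Complex.re).sum = m := by
    have := (Complex.reAddGroupHom).map_multiset_sum P.roots
    rw [hsumroots] at this
    simpa using this.symm
  have hex : ∃ z ∈ P.roots, 0 < z.re := by
    by_contra h
    push_neg at h
    have hle : ((P.roots).map Complex.re).sum ≤ 0 := by
      have := Multiset.sum_le_card_nsmul ((P.roots).map Complex.re) 0 (by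
        intro x hx
        obtain ⟨z, hz, rfl⟩ := Multiset.mem_map.mp hx
        exact h z hz)
      simpa using this
    rw [hre] at hle
    exact absurd hle (not_le.mpr hm)
  obtain ⟨z, hz, hzre⟩ := hex
  refine ⟨z, hzre, ?_⟩
  have hroot : P.IsRoot z := (Polynomial.mem_roots (hmo.ne_zero)).mp hz
  have := hroot
  simp only [hP, hQ, Polynomial.IsRoot, Polynomial.eval_sub, Polynomial.eval_add,
    Polynomial.eval_mul, Polynomial.eval_pow, Polynomial.eval_X, Polynomial.eval_C] at this
  linear_combination this


lemma reD {g : ℝ → ℂ} {g' : ℂ} {t : ℝ} (h : HasDerivAt g g' t) :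
    HasDerivAt (fun t => (g t).re) g'.re t :=
  Complex.reCLM.hasFDerivAt.comp_hasDerivAt t h

theorem pid_fails_third_order
    (L : ℝ) (hL : 0 < L) (kp ki kd ystar : ℝ) :
    ∃ f : ℝ × ℝ × ℝ → ℝ,
      (∀ x y : ℝ × ℝ × ℝ, |f x - f y| ≤
        L * Real.sqrt ((x.1 - y.1) ^ 2 + (x.2.1 - y.2.1) ^ 2 + (x.2.2 - y.2.2) ^ 2)) ∧
      ∃ x1 x2 x3 : ℝ → ℝ,
        (∀ t : ℝ, 0 ≤ t →
          HasDerivAt x1 (x2 t) t ∧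
          HasDerivAt x2 (x3 t) t ∧
          HasDerivAt x3 (f (x1 t, x2 t, x3 t)
            + kp * (x1 t - ystar) + ki * (∫ s in (0:ℝ)..t, (x1 s - ystar))
            + kd * x2 t) t) ∧
        (∀ M : ℝ, ∃ t : ℝ, 0 ≤ t ∧ M < |x1 t - ystar|) := by
  obtain ⟨z, hzre, hz4⟩ := exists_root_pos_re L kd kp ki hL
  have hz0 : z ≠ 0 := fun h => by simp [h] at hzre
  set E : ℝ → ℂ := fun t => Complex.exp (z * t) with hE
  set c : ℝ := ((ki:ℂ)/z).re with hc
  refine ⟨fun p => L * p.2.2 + c, ?_, fun t => ystar + (E t).re,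
    fun t => (z * E t).re, fun t => (z^2 * E t).re, ?_, ?_⟩
  · -- Lipschitz
    intro x y
    have h1 : L * x.2.2 + c - (L * y.2.2 + c) = L * (x.2.2 - y.2.2) := by ring
    rw [h1, abs_mul, abs_of_pos hL]
    apply mul_le_mul_of_nonneg_left _ hL.le
    rw [← Real.sqrt_sq_eq_abs]
    apply Real.sqrt_le_sqrt
    nlinarith [sq_nonneg (x.1 - y.1), sq_nonneg (x.2.1 - y.2.1)]
  · -- derivatives
    have hEd : ∀ t : ℝ, HasDerivAt E (z * E t) t := by
      intro t
      have h1 : HasDerivAt (fun t : ℝ => z * (t:ℂ)) z t := by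
        simpa using (Complex.ofRealCLM.hasDerivAt (x := t)).const_mul z
      simpa [hE, mul_comm] using h1.cexp
    intro t _
    have hInt : (∫ s in (0:ℝ)..t, ((fun t => ystar + (E t).re) s - ystar))
        = ((E t - 1)/z).re := by
      have hF : ∀ u : ℝ, HasDerivAt (fun u => ((E u - 1)/z).re) ((E u).re) u := by
        intro u
        have := reD (((hEd u).sub_const 1).div_const z)
        simpa [mul_div_assoc, mul_div_cancel_left₀ _ hz0] using this
      have hcont : Continuous fun s : ℝ => (E s).re := by
        apply Complex.continuous_re.comp
        exact Complex.continuous_exp.comp (by continuity)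
      have := intervalIntegral.integral_eq_sub_of_hasDerivAt
        (f := fun u => ((E u - 1)/z).re) (a := 0) (b := t)
        (fun u _ => hF u) ((hcont.intervalIntegrable 0 t))
      simpa [hE] using this
    refine ⟨?_, ?_, ?_⟩
    · simpa using (reD (hEd t)).const_add ystar
    · have := reD ((hEd t).const_mul z)
      convert this using 2
      ring
    · have h3 : HasDerivAt (fun t => (z^2 * E t).re) ((z^3 * E t).re) t := by
        have := reD ((hEd t).const_mul (z^2))
        convert this using 2
        ring
      have key : (z:ℂ)^3 * E t = (L:ℂ)*(z^2*E t) + (ki:ℂ)/z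
          + (kp:ℂ)*(E t) + (ki:ℂ)*((E t - 1)/z)
          + (kd:ℂ)*(z*E t) := by
        field_simp
        linear_combination (E t) * hz4
      have goalEq : L * (z^2*E t).re + ((ki:ℂ)/z).re + kp*(E t).re
          + ki*((E t - 1)/z).re + kd*(z*E t).re = (z^3*E t).re := by
        have h := congrArg Complex.re key.symm
        simp only [Complex.add_re, Complex.re_ofReal_mul] at h
        exact h
      convert h3 using 1
      rw [hInt]
      simp only [add_sub_cancel_left, hc]
      linear_combination goalEq
  · -- unboundedness
    intro M
    have hval : ∀ t : ℝ, (ystar + (E t).re) - ystar = Real.exp (z.re * t) * Real.cos (z.im * t) := by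
      intro t
      have h1 : (z * (t:ℂ)).re = z.re * t := by simp [Complex.mul_re]
      have h2 : (z * (t:ℂ)).im = z.im * t := by simp [Complex.mul_im]
      simp [hE, Complex.exp_re, h1, h2]
    by_cases him : z.im = 0
    · refine ⟨(|M|+1)/z.re, by positivity, ?_⟩
      rw [hval, him]
      have ha : z.re * ((|M|+1)/z.re) = |M|+1 := by field_simp
      rw [ha]
      simp only [zero_mul, Real.cos_zero, mul_one]
      rw [abs_of_pos (Real.exp_pos _)]
      calc M ≤ |M| := le_abs_self M
        _ < 1 + (|M|+1) := by linarith
        _ ≤ Real.exp (|M|+1) := by linarith [Real.add_one_le_exp (|M|+1)]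
    · have hb : 0 < |z.im| := abs_pos.mpr him
      set d : ℝ := z.re * (2*π/|z.im|) with hd
      have hdpos : 0 < d := by positivity
      obtain ⟨n, hn⟩ := exists_nat_gt (|M| / d)
      set t : ℝ := 2*π/|z.im| * n with ht
      have ht0 : 0 ≤ t := by positivity
      refine ⟨t, ht0, ?_⟩
      rw [hval]
      have hcos : Real.cos (z.im * t) = 1 := by
        rw [← Real.cos_abs, abs_mul, abs_of_nonneg ht0, ht]
        have : |z.im| * (2*π/|z.im| * n) = n * (2*π) := by field_simp
        rw [this, Real.cos_nat_mul_two_pi]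
      rw [hcos, mul_one, abs_of_pos (Real.exp_pos _)]
      have hat : z.re * t = d * n := by rw [ht, hd]; ring
      have h1 : |M| < d * n := by rw [mul_comm]; exact (div_lt_iff₀ hdpos).mp hn
      calc M ≤ |M| := le_abs_self M
        _ < d * n := h1
        _ < 1 + d * n := by linarith
        _ ≤ Real.exp (d * n) := by linarith [Real.add_one_le_exp (d * n)]
        _ = Real.exp (z.re * t) := by rw [hat]
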